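/- arXiv:2203.00544 — 2 statements merged into one kernel-verified Lean document; each statement's English description precedes it below -/
import Mathlib

section
/- In any school-choice instance, any matching that is stable with respect to the minority-reserve choice functions {C^MR_c : c ∈ C} (in particular the student-optimal stable matching μ^MR) admits no in-group blocking pairs. -/
/-!
Common formalization of school-choice instances with reserved seats
(minority reserve, joint seat allocation, discovery program).

Conventions:
* `prio c s` is the priority rank of student `s` at school `c`
  (smaller value = higher priority); injectivity encodes a strict priority order.
* `pref s o` is the preference rank of outcome `o : Option C` for student `s`
  (smaller value = more preferred); `none` denotes being unmatched, and a school
  `c` is acceptable to `s` iff `pref s (some c) < pref s none`.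
-/

open Finset

structure SchoolChoice (S C : Type*) [Fintype S] [DecidableEq S] [Fintype C] [DecidableEq C] where
  /-- the set of disadvantaged (minority) students; the rest are advantaged -/
  dis : Finset S
  /-- preference rank of each outcome (school or `none` = unmatched) for each student -/
  pref : S → Option C → ℕ
  pref_inj : ∀ s, Function.Injective (pref s)
  /-- priority rank of each student at each school (lower = higher priority) -/
  prio : C → S → ℕ
  prio_inj : ∀ c, Function.Injective (prio c)
  /-- quota of each school -/
  q : C → ℕ
  /-- reservation quota of each school -/
  qR : C → ℕ
  qR_le : ∀ c, qR c ≤ q c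

namespace SchoolChoice

variable {S C : Type*} [Fintype S] [DecidableEq S] [Fintype C] [DecidableEq C]

/-- `max(T, >_c, k)`: the `min(k, |T|)` highest-priority students of `T` at school `c`. -/
def maxSet (I : SchoolChoice S C) (c : C) (T : Finset S) (k : ℕ) : Finset S :=
  T.filter fun s => (T.filter fun t => I.prio c t < I.prio c s).card < k

/-- baseline choice function `C^BASE_c` -/
def CBASE (I : SchoolChoice S C) (c : C) (T : Finset S) : Finset S :=
  I.maxSet c T (I.q c)

/-- `S1^R` of the minority-reserve choice function -/
def mrRes (I : SchoolChoice S C) (c : C) (T : Finset S) : Finset S :=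
  I.maxSet c (T ∩ I.dis) (I.qR c)

/-- minority-reserve choice function `C^MR_c` -/
def CMR (I : SchoolChoice S C) (c : C) (T : Finset S) : Finset S :=
  I.mrRes c T ∪ I.maxSet c (T \ I.mrRes c T) (I.q c - (I.mrRes c T).card)

/-- `S1^G` of the joint-seat-allocation choice function -/
def jsaGen (I : SchoolChoice S C) (c : C) (T : Finset S) : Finset S :=
  I.maxSet c T (I.q c - I.qR c)

/-- `S1^R` of the joint-seat-allocation choice function -/
def jsaRes (I : SchoolChoice S C) (c : C) (T : Finset S) : Finset S :=
  I.maxSet c ((T ∩ I.dis) \ I.jsaGen c T) (I.qR c)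

/-- joint-seat-allocation choice function `C^JSA_c` -/
def CJSA (I : SchoolChoice S C) (c : C) (T : Finset S) : Finset S :=
  I.jsaGen c T ∪ I.jsaRes c T ∪
    I.maxSet c (T \ (I.jsaGen c T ∪ I.jsaRes c T))
      (I.q c - (I.jsaGen c T ∪ I.jsaRes c T).card)

/-- school `c` is acceptable to student `s` -/
def acceptable (I : SchoolChoice S C) (s : S) (c : C) : Prop :=
  I.pref s (some c) < I.pref s none

/-- `μ(c)`: the set of students assigned to school `c` by `μ` -/
def assigned (I : SchoolChoice S C) (μ : S → Option C) (c : C) : Finset S :=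
  Finset.univ.filter fun s => μ s = some c

/-- `μ` is a matching: students are assigned only acceptable schools, quotas respected -/
def IsMatching (I : SchoolChoice S C) (μ : S → Option C) : Prop :=
  (∀ s c, μ s = some c → I.acceptable s c) ∧ ∀ c, (I.assigned μ c).card ≤ I.q c

/-- `μ` is stable w.r.t. the choice functions `Ch`: it is a matching and no pair
`(s, c)` with `c` acceptable to `s` satisfies `c >_s μ(s)` and `s ∈ Ch c (μ(c) ∪ {s})`. -/
def IsStable (I : SchoolChoice S C) (Ch : C → Finset S → Finset S) (μ : S → Option C) : Prop :=
  I.IsMatching μ ∧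
    ∀ s c, I.acceptable s c → I.pref s (some c) < I.pref s (μ s) →
      s ∉ Ch c (insert s (I.assigned μ c))

/-- `μ` is the student-optimal stable matching w.r.t. `Ch`:
stable and weakly preferred by every student to every stable matching. -/
def IsOptStable (I : SchoolChoice S C) (Ch : C → Finset S → Finset S) (μ : S → Option C) :
    Prop :=
  I.IsStable Ch μ ∧ ∀ μ', I.IsStable Ch μ' → ∀ s, I.pref s (μ s) ≤ I.pref s (μ' s)

/-! Restricted (sub)instances, used by the three-stage discovery program: only students
in `A` participate and school `c` has quota `q' c`, with baseline (responsive) choice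
functions. -/

def IsMatchingOn (I : SchoolChoice S C) (A : Finset S) (q' : C → ℕ) (μ : S → Option C) :
    Prop :=
  (∀ s, s ∉ A → μ s = none) ∧
    (∀ s c, μ s = some c → I.acceptable s c) ∧ ∀ c, (I.assigned μ c).card ≤ q' c

def IsStableOn (I : SchoolChoice S C) (A : Finset S) (q' : C → ℕ) (μ : S → Option C) : Prop :=
  I.IsMatchingOn A q' μ ∧
    ∀ s ∈ A, ∀ c : C, I.acceptable s c → I.pref s (some c) < I.pref s (μ s) →
      s ∉ I.maxSet c (insert s (I.assigned μ c)) (q' c)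

def IsOptStableOn (I : SchoolChoice S C) (A : Finset S) (q' : C → ℕ) (μ : S → Option C) :
    Prop :=
  I.IsStableOn A q' μ ∧
    ∀ μ', I.IsStableOn A q' μ' → ∀ s ∈ A, I.pref s (μ s) ≤ I.pref s (μ' s)

/-- `μ` is the discovery-program matching: the union of the three stage matchings
`μ1` (general seats, all students), `μ2` (reserved seats, unmatched disadvantaged
students), `μ3` (vacant reserved seats, unmatched advantaged students). -/
def IsDisc (I : SchoolChoice S C) (μ : S → Option C) : Prop :=
  ∃ μ1 μ2 μ3 : S → Option C,
    I.IsOptStableOn Finset.univ (fun c => I.q c - I.qR c) μ1 ∧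
    I.IsOptStableOn (I.dis.filter fun s => μ1 s = none) I.qR μ2 ∧
    I.IsOptStableOn ((Finset.univ \ I.dis).filter fun s => μ1 s = none)
      (fun c => I.qR c - (I.assigned μ2 c).card) μ3 ∧
    ∀ s, μ s = Option.elim (μ1 s) (Option.elim (μ2 s) (μ3 s) some) some

/-- `(s, c)` is a blocking pair of `μ` for disadvantaged students -/
def BlockDis (I : SchoolChoice S C) (μ : S → Option C) (s : S) (c : C) : Prop :=
  s ∈ I.dis ∧ I.acceptable s c ∧ I.pref s (some c) < I.pref s (μ s) ∧
    ∃ s' ∈ I.assigned μ c, s' ∈ I.dis ∧ I.prio c s < I.prio c s'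

/-- `(s, c)` is a blocking pair of `μ` for advantaged students -/
def BlockAdv (I : SchoolChoice S C) (μ : S → Option C) (s : S) (c : C) : Prop :=
  s ∉ I.dis ∧ I.acceptable s c ∧ I.pref s (some c) < I.pref s (μ s) ∧
    ∃ s' ∈ I.assigned μ c, s' ∉ I.dis ∧ I.prio c s < I.prio c s'

/-- `(s, c)` is an in-group blocking pair of `μ` -/
def InGroupBlock (I : SchoolChoice S C) (μ : S → Option C) (s : S) (c : C) : Prop :=
  I.BlockDis μ s c ∨ I.BlockAdv μ s c

/-- all schools share a common priority order over the students -/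
def CommonPriority (I : SchoolChoice S C) : Prop :=
  ∀ c c' : C, ∀ t u : S, I.prio c t < I.prio c u ↔ I.prio c' t < I.prio c' u

/-- the reservation quotas are a smart reserve w.r.t. the baseline matching `μBase` -/
def SmartReserve (I : SchoolChoice S C) (μBase : S → Option C) : Prop :=
  ∀ c, (I.assigned μBase c ∩ I.dis).card ≤ I.qR c

end SchoolChoice

namespace SchoolChoice

variable {S C : Type*} [Fintype S] [DecidableEq S] [Fintype C] [DecidableEq C]

lemma maxSet_subset (I : SchoolChoice S C) (c : C) (A : Finset S) (k : ℕ) :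
    I.maxSet c A k ⊆ A := filter_subset _ _

lemma mem_maxSet_of_lt (I : SchoolChoice S C) {c : C} {A : Finset S} {k : ℕ} {s s' : S}
    (hs : s ∈ A) (hs' : s' ∈ I.maxSet c A k) (h : I.prio c s < I.prio c s') :
    s ∈ I.maxSet c A k := by
  rw [maxSet, mem_filter] at hs' ⊢
  refine ⟨hs, lt_of_le_of_lt ?_ hs'.2⟩
  refine card_le_card fun t ht => ?_
  rw [mem_filter] at ht ⊢
  exact ⟨ht.1, ht.2.trans h⟩

lemma key_maxSet (I : SchoolChoice S C) {c : C} {T R : Finset S} {s s' : S}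
    (hRT : R ⊆ T) (hs : s ∈ T) (hsR : s ∉ R) (hs' : s' ∈ T) (hs'R : s' ∉ R)
    (h : I.prio c s < I.prio c s') (hT : T.card ≤ I.q c + 1) :
    s ∈ I.maxSet c (T \ R) (I.q c - R.card) := by
  have hne : s ≠ s' := fun e => by simp [e] at h
  rw [maxSet, mem_filter]
  refine ⟨mem_sdiff.2 ⟨hs, hsR⟩, ?_⟩
  set F := (T \ R).filter fun t => I.prio c t < I.prio c s with hF
  have hsF : s ∉ F := fun hmem => by
    have := (mem_filter.1 hmem).2; exact lt_irrefl _ this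
  have hs'F : s' ∉ F := fun hmem => by
    have := (mem_filter.1 hmem).2; exact lt_asymm h this
  have hsub : insert s (insert s' F) ⊆ T \ R := by
    intro t ht
    rcases mem_insert.1 ht with rfl | ht
    · exact mem_sdiff.2 ⟨hs, hsR⟩
    rcases mem_insert.1 ht with rfl | ht
    · exact mem_sdiff.2 ⟨hs', hs'R⟩
    · exact (filter_subset _ _) ht
  have hcard : F.card + 2 ≤ (T \ R).card := by
    have h1 : (insert s (insert s' F)).card ≤ (T \ R).card := card_le_card hsub
    rw [card_insert_of_notMem (by simp [hne, hsF]),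
      card_insert_of_notMem hs'F] at h1
    omega
  have h2 : (T \ R).card = T.card - R.card := card_sdiff_of_subset hRT
  have h3 : R.card ≤ T.card := card_le_card hRT
  omega

end SchoolChoice
/-- any matching stable w.r.t. the minority-reserve choice functions
admits no in-group blocking pairs. -/
theorem MR_no_ingroup_blocking {S C : Type*} [Fintype S] [DecidableEq S] [Fintype C] [DecidableEq C]
    (I : SchoolChoice S C) (μ : S → Option C)
    (hstable : I.IsStable I.CMR μ) (s : S) (c : C) :
    ¬ I.InGroupBlock μ s c := by
  rintro (⟨hsd, hacc, hpref, s', hs'a, hs'd, hlt⟩ | ⟨hsd, hacc, hpref, s', hs'a, hs'd, hlt⟩) <;>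
  · have hnot := hstable.2 s c hacc hpref
    set T := insert s (I.assigned μ c) with hT
    have hTcard : T.card ≤ I.q c + 1 :=
      (card_insert_le _ _).trans (Nat.add_le_add_right (hstable.1.2 c) 1)
    have hsT : s ∈ T := mem_insert_self _ _
    have hs'T : s' ∈ T := mem_insert_of_mem hs'a
    set R := I.mrRes c T with hR
    have hRTd : R ⊆ T ∩ I.dis := I.maxSet_subset c _ _
    have hRT : R ⊆ T := hRTd.trans (inter_subset_left)
    apply hnot
    first
    | -- disadvantaged case
      (by_cases hsR : s ∈ R
       · exact mem_union_left _ hsR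
       · have hs'R : s' ∉ R := fun hmem =>
           hsR (I.mem_maxSet_of_lt (mem_inter.2 ⟨hsT, hsd⟩) hmem hlt)
         exact mem_union_right _ (I.key_maxSet hRT hsT hsR hs'T hs'R hlt hTcard))
    | -- advantaged case
      (have hsR : s ∉ R := fun hmem => hsd (mem_inter.1 (hRTd hmem)).2
       have hs'R : s' ∉ R := fun hmem => hs'd (mem_inter.1 (hRTd hmem)).2
       exact mem_union_right _ (I.key_maxSet hRT hsT hsR hs'T hs'R hlt hTcard))
end

section
/- If the market is highly competitive, i.e., |μ^MR(c) ∩ S^m| ≤ q_c^R for every school c, then μ^JSA weakly dominates μ^MR for disadvantaged students: μ^JSA(s) ≥_s μ^MR(s) for every disadvantaged student s ∈ S^m. -/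
/-!
Common formalization of school-choice instances with reserved seats
(minority reserve, joint seat allocation, discovery program).

Conventions:
* `prio c s` is the priority rank of student `s` at school `c`
  (smaller value = higher priority); injectivity encodes a strict priority order.
* `pref s o` is the preference rank of outcome `o : Option C` for student `s`
  (smaller value = more preferred); `none` denotes being unmatched, and a school
  `c` is acceptable to `s` iff `pref s (some c) < pref s none`.
-/

open Finset

namespace SchoolChoice

variable {S C : Type*} [Fintype S] [DecidableEq S] [Fintype C] [DecidableEq C]
variable (I : SchoolChoice S C)

section MaxSet

variable {I} {c : C} {T T' : Finset S} {k : ℕ} {s y : S}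

lemma mem_maxSet :
    s ∈ I.maxSet c T k ↔ s ∈ T ∧ (T.filter fun t => I.prio c t < I.prio c s).card < k :=
  Finset.mem_filter

lemma maxSet_subset_s10 : I.maxSet c T k ⊆ T := Finset.filter_subset _ _

lemma maxSet_mono (hsub : T' ⊆ T) (hs : s ∈ I.maxSet c T k) (hs' : s ∈ T') :
    s ∈ I.maxSet c T' k := by
  rw [mem_maxSet] at hs ⊢
  exact ⟨hs', lt_of_le_of_lt (Finset.card_le_card (Finset.filter_subset_filter _ hsub)) hs.2⟩

lemma prio_lt_of_not_maxSet (hsT : s ∈ T) (hs : s ∉ I.maxSet c T k)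
    (hy : y ∈ I.maxSet c T k) : I.prio c y < I.prio c s := by
  rw [mem_maxSet] at hy
  by_contra h
  push_neg at h
  rcases h.lt_or_eq with h | h
  · -- prio s < prio y, so preds of y ⊇ preds s ∪ {s}
    have hsub : insert s (T.filter fun t => I.prio c t < I.prio c s) ⊆
        T.filter fun t => I.prio c t < I.prio c y := by
      intro t ht
      rcases Finset.mem_insert.1 ht with rfl | ht
      · exact Finset.mem_filter.2 ⟨hsT, h⟩
      · rcases Finset.mem_filter.1 ht with ⟨h1, h2⟩
        exact Finset.mem_filter.2 ⟨h1, h2.trans h⟩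
    have hns : s ∉ T.filter fun t => I.prio c t < I.prio c s := by
      simp [Finset.mem_filter]
    have hk : k ≤ (T.filter fun t => I.prio c t < I.prio c s).card := by
      by_contra hk
      push_neg at hk
      exact hs (mem_maxSet.2 ⟨hsT, hk⟩)
    have := Finset.card_le_card hsub
    rw [Finset.card_insert_of_notMem hns] at this
    omega
  · cases I.prio_inj c h
    exact hs (mem_maxSet.2 ⟨hsT, hy.2⟩)

/-- the number of predecessors of a member is less than the card of the set -/
lemma predcard_lt (hsT : s ∈ T) :
    (T.filter fun t => I.prio c t < I.prio c s).card < T.card := by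
  have hsub : (T.filter fun t => I.prio c t < I.prio c s) ⊆ T.erase s := by
    intro t ht
    rcases Finset.mem_filter.1 ht with ⟨h1, h2⟩
    exact Finset.mem_erase.2 ⟨fun h => by subst h; exact lt_irrefl _ h2, h1⟩
  have := Finset.card_le_card hsub
  have := Finset.card_erase_of_mem hsT
  have := Finset.card_pos.2 ⟨s, hsT⟩
  omega

lemma maxSet_card : (I.maxSet c T k).card = min k T.card := by
  classical
  set f : S → ℕ := fun s => (T.filter fun t => I.prio c t < I.prio c s).card with hf
  have hmono : ∀ a ∈ T, ∀ b ∈ T, I.prio c a < I.prio c b → f a < f b := by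
    intro a ha b hb hab
    have hsub : insert a (T.filter fun t => I.prio c t < I.prio c a) ⊆
        T.filter fun t => I.prio c t < I.prio c b := by
      intro t ht
      rcases Finset.mem_insert.1 ht with rfl | ht
      · exact Finset.mem_filter.2 ⟨ha, hab⟩
      · rcases Finset.mem_filter.1 ht with ⟨h1, h2⟩
        exact Finset.mem_filter.2 ⟨h1, h2.trans hab⟩
    have hna : a ∉ T.filter fun t => I.prio c t < I.prio c a := by
      simp [Finset.mem_filter]
    have := Finset.card_le_card hsub
    rw [Finset.card_insert_of_notMem hna] at this
    simpa [hf] using this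
  have hinj : Set.InjOn f T := by
    intro a ha b hb hfab
    rcases lt_trichotomy (I.prio c a) (I.prio c b) with h | h | h
    · exact absurd hfab (Nat.ne_of_lt (hmono a ha b hb h))
    · exact I.prio_inj c h
    · exact absurd hfab.symm (Nat.ne_of_lt (hmono b hb a ha h))
  have himage : T.image f = Finset.range T.card := by
    apply Finset.eq_of_subset_of_card_le
    · intro n hn
      rcases Finset.mem_image.1 hn with ⟨a, ha, rfl⟩
      exact Finset.mem_range.2 (predcard_lt ha)
    · rw [Finset.card_range, Finset.card_image_of_injOn hinj]
  have hms : I.maxSet c T k = T.filter fun s => f s < k := rfl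
  have h2 : (T.filter fun s => f s < k).image f = (T.image f).filter fun n => n < k := by
    ext n
    simp only [Finset.mem_image, Finset.mem_filter]
    constructor
    · rintro ⟨a, ⟨ha, hak⟩, rfl⟩
      exact ⟨⟨a, ha, rfl⟩, hak⟩
    · rintro ⟨⟨a, ha, rfl⟩, hn⟩
      exact ⟨a, ⟨ha, hn⟩, rfl⟩
  have h3 : ((T.image f).filter fun n => n < k) = Finset.range (min k T.card) := by
    rw [himage]
    ext n
    simp only [Finset.mem_filter, Finset.mem_range, lt_min_iff]
    tauto
  have h4 : (I.maxSet c T k).card = ((I.maxSet c T k).image f).card :=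
    (Finset.card_image_of_injOn (hinj.mono (by exact_mod_cast maxSet_subset_s10))).symm
  rw [h4, hms, h2, h3, Finset.card_range]

lemma maxSet_card_le : (I.maxSet c T k).card ≤ k := by
  rw [maxSet_card]; exact min_le_left _ _

lemma maxSet_all (h : T.card ≤ k) : I.maxSet c T k = T := by
  apply Finset.filter_true_of_mem
  intro s hs
  exact lt_of_lt_of_le (predcard_lt hs) h

lemma maxSet_consist (hCT : I.maxSet c T k ⊆ T') (hsub : T' ⊆ T) :
    I.maxSet c T' k = I.maxSet c T k := by
  apply Finset.Subset.antisymm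
  · intro x hx
    by_contra hxT
    have hxT' : x ∈ T' := maxSet_subset_s10 hx
    have hxTT : x ∈ T := hsub hxT'
    -- maxSet T k ⊆ preds of x in T'
    have hsub2 : I.maxSet c T k ⊆ T'.filter fun t => I.prio c t < I.prio c x := by
      intro y hy
      exact Finset.mem_filter.2 ⟨hCT hy, prio_lt_of_not_maxSet hxTT hxT hy⟩
    have hk : k < T.card := by
      have h1 : k ≤ (T.filter fun t => I.prio c t < I.prio c x).card := by
        by_contra hk
        push_neg at hk
        exact hxT (mem_maxSet.2 ⟨hxTT, hk⟩)
      exact lt_of_le_of_lt h1 (predcard_lt hxTT)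
    have hcard : (I.maxSet c T k).card = k := by
      rw [maxSet_card]; omega
    have := Finset.card_le_card hsub2
    rw [hcard] at this
    exact absurd (mem_maxSet.1 hx).2 (not_lt.2 this)
  · intro x hx
    exact maxSet_mono hsub hx (hCT hx)

end MaxSet

end SchoolChoice
namespace SchoolChoice

variable {S C : Type*} [Fintype S] [DecidableEq S] [Fintype C] [DecidableEq C]

section Choice

variable {I : SchoolChoice S C} {c : C} {T T' : Finset S} {s : S}

lemma mrRes_subset : I.mrRes c T ⊆ T ∩ I.dis := maxSet_subset_s10

lemma CMR_subset : I.CMR c T ⊆ T := by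
  apply Finset.union_subset
  · exact mrRes_subset.trans Finset.inter_subset_left
  · exact maxSet_subset_s10.trans (Finset.sdiff_subset)

lemma jsaGen_subset : I.jsaGen c T ⊆ T := maxSet_subset_s10

lemma jsaRes_subset : I.jsaRes c T ⊆ (T ∩ I.dis) \ I.jsaGen c T := maxSet_subset_s10

lemma CJSA_subset : I.CJSA c T ⊆ T := by
  apply Finset.union_subset
  · apply Finset.union_subset jsaGen_subset
    exact jsaRes_subset.trans ((Finset.sdiff_subset).trans Finset.inter_subset_left)
  · exact maxSet_subset_s10.trans (Finset.sdiff_subset)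

lemma CMR_all (h : T.card ≤ I.q c) : I.CMR c T = T := by
  have hR : I.mrRes c T ⊆ T := mrRes_subset.trans Finset.inter_subset_left
  have h1 : (T \ I.mrRes c T).card ≤ I.q c - (I.mrRes c T).card := by
    rw [Finset.card_sdiff_of_subset hR]
    exact Nat.sub_le_sub_right h _
  rw [CMR, maxSet_all h1, Finset.union_sdiff_of_subset hR]

lemma jsa_parts_disjoint : Disjoint (I.jsaGen c T) (I.jsaRes c T) := by
  apply Finset.disjoint_left.2
  intro a ha ha2
  exact (Finset.mem_sdiff.1 (jsaRes_subset ha2)).2 ha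

lemma jsa_GR_card : (I.jsaGen c T ∪ I.jsaRes c T).card ≤ I.q c := by
  rw [Finset.card_union_of_disjoint jsa_parts_disjoint]
  calc (I.jsaGen c T).card + (I.jsaRes c T).card ≤ (I.q c - I.qR c) + I.qR c :=
        Nat.add_le_add maxSet_card_le maxSet_card_le
    _ = I.q c := Nat.sub_add_cancel (I.qR_le c)

lemma CJSA_card_le : (I.CJSA c T).card ≤ I.q c := by
  have h3 : (I.maxSet c (T \ (I.jsaGen c T ∪ I.jsaRes c T))
      (I.q c - (I.jsaGen c T ∪ I.jsaRes c T).card)).card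
      ≤ I.q c - (I.jsaGen c T ∪ I.jsaRes c T).card := maxSet_card_le
  have h4 := jsa_GR_card (I := I) (c := c) (T := T)
  calc (I.CJSA c T).card ≤ (I.jsaGen c T ∪ I.jsaRes c T).card +
      (I.maxSet c (T \ (I.jsaGen c T ∪ I.jsaRes c T))
        (I.q c - (I.jsaGen c T ∪ I.jsaRes c T).card)).card := Finset.card_union_le _ _
    _ ≤ I.q c := by omega

/-- Lemma 1: a disadvantaged student rejected by `C^JSA` has at least `qR c`
disadvantaged students of higher priority in the pool. -/
lemma dis_reject_JSA (hdis : s ∈ I.dis) (hsT : s ∈ T) (hrej : s ∉ I.CJSA c T) :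
    I.qR c ≤ ((T ∩ I.dis).filter fun t => I.prio c t < I.prio c s).card := by
  have hG : s ∉ I.jsaGen c T := fun h => hrej (Finset.mem_union_left _ (Finset.mem_union_left _ h))
  have hR : s ∉ I.jsaRes c T := fun h => hrej (Finset.mem_union_left _ (Finset.mem_union_right _ h))
  have hground : s ∈ (T ∩ I.dis) \ I.jsaGen c T :=
    Finset.mem_sdiff.2 ⟨Finset.mem_inter.2 ⟨hsT, hdis⟩, hG⟩
  have h1 : I.qR c ≤ (((T ∩ I.dis) \ I.jsaGen c T).filter
      fun t => I.prio c t < I.prio c s).card := by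
    by_contra h
    push_neg at h
    exact hR (mem_maxSet.2 ⟨hground, h⟩)
  refine h1.trans (Finset.card_le_card (Finset.filter_subset_filter _ ?_))
  exact Finset.sdiff_subset

/-- substitutability of `C^MR` -/
lemma CMR_subst (hsub : T' ⊆ T) (hs' : s ∈ T') (hs : s ∈ I.CMR c T) : s ∈ I.CMR c T' := by
  have hRmem : ∀ x, x ∈ I.mrRes c T → x ∈ T' → x ∈ I.mrRes c T' := by
    intro x hx hxT'
    have hxdis : x ∈ I.dis := (Finset.mem_inter.1 (mrRes_subset hx)).2
    exact maxSet_mono (Finset.inter_subset_inter hsub (le_refl _))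
      hx (Finset.mem_inter.2 ⟨hxT', hxdis⟩)
  rcases Finset.mem_union.1 hs with hs | hs
  · exact Finset.mem_union_left _ (hRmem s hs hs')
  · by_cases hsR : s ∈ I.mrRes c T'
    · exact Finset.mem_union_left _ hsR
    apply Finset.mem_union_right
    rcases mem_maxSet.1 hs with ⟨hsg, hcard⟩
    have hsnR : s ∉ I.mrRes c T := (Finset.mem_sdiff.1 hsg).2
    apply mem_maxSet.2
    refine ⟨Finset.mem_sdiff.2 ⟨hs', hsR⟩, ?_⟩
    have hP : ((T' \ I.mrRes c T').filter fun t => I.prio c t < I.prio c s) ⊆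
        ((T \ I.mrRes c T).filter fun t => I.prio c t < I.prio c s) := by
      intro x hx
      rcases Finset.mem_filter.1 hx with ⟨hx1, hx2⟩
      rcases Finset.mem_sdiff.1 hx1 with ⟨hxT', hxR'⟩
      refine Finset.mem_filter.2 ⟨Finset.mem_sdiff.2 ⟨hsub hxT', fun hxR => hxR' ?_⟩, hx2⟩
      exact hRmem x hxR hxT'
    have hRcard : (I.mrRes c T').card ≤ (I.mrRes c T).card := by
      rw [mrRes, mrRes, maxSet_card, maxSet_card]
      exact min_le_min (le_refl _)
        (Finset.card_le_card (Finset.inter_subset_inter hsub (le_refl _)))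
    have hRq : (I.mrRes c T).card ≤ I.q c := maxSet_card_le.trans (I.qR_le c)
    have h1 := Finset.card_le_card hP
    omega

/-- substitutability of `C^JSA` -/
lemma CJSA_subst (hsub : T' ⊆ T) (hs' : s ∈ T') (hs : s ∈ I.CJSA c T) : s ∈ I.CJSA c T' := by
  have hGmem : ∀ x, x ∈ I.jsaGen c T → x ∈ T' → x ∈ I.jsaGen c T' := by
    intro x hx hxT'
    exact maxSet_mono hsub hx hxT'
  have hRmem : ∀ x, x ∈ I.jsaRes c T → x ∈ T' → x ∉ I.jsaGen c T' → x ∈ I.jsaRes c T' := by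
    intro x hx hxT' hxG'
    have hxground := jsaRes_subset hx
    rcases Finset.mem_sdiff.1 hxground with ⟨hxTd, hxG⟩
    have hxdis : x ∈ I.dis := (Finset.mem_inter.1 hxTd).2
    rcases mem_maxSet.1 hx with ⟨_, hcard⟩
    apply mem_maxSet.2
    refine ⟨Finset.mem_sdiff.2 ⟨Finset.mem_inter.2 ⟨hxT', hxdis⟩, hxG'⟩, ?_⟩
    refine lt_of_le_of_lt (Finset.card_le_card ?_) hcard
    intro t ht
    rcases Finset.mem_filter.1 ht with ⟨ht1, ht2⟩
    rcases Finset.mem_sdiff.1 ht1 with ⟨htTd, htG'⟩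
    rcases Finset.mem_inter.1 htTd with ⟨htT', htdis⟩
    refine Finset.mem_filter.2 ⟨Finset.mem_sdiff.2
      ⟨Finset.mem_inter.2 ⟨hsub htT', htdis⟩, fun htG => htG' (hGmem t htG htT')⟩, ht2⟩
  -- ground set of jsaRes shrinks
  have hU : (T' ∩ I.dis) \ I.jsaGen c T' ⊆ (T ∩ I.dis) \ I.jsaGen c T := by
    intro x hx
    rcases Finset.mem_sdiff.1 hx with ⟨hxTd, hxG'⟩
    rcases Finset.mem_inter.1 hxTd with ⟨hxT', hxdis⟩
    exact Finset.mem_sdiff.2 ⟨Finset.mem_inter.2 ⟨hsub hxT', hxdis⟩,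
      fun hxG => hxG' (hGmem x hxG hxT')⟩
  rcases Finset.mem_union.1 hs with hs | hs
  · rcases Finset.mem_union.1 hs with hs | hs
    · exact Finset.mem_union_left _ (Finset.mem_union_left _ (hGmem s hs hs'))
    · by_cases hsG' : s ∈ I.jsaGen c T'
      · exact Finset.mem_union_left _ (Finset.mem_union_left _ hsG')
      · exact Finset.mem_union_left _ (Finset.mem_union_right _ (hRmem s hs hs' hsG'))
  · -- third phase
    by_cases hsG' : s ∈ I.jsaGen c T'
    · exact Finset.mem_union_left _ (Finset.mem_union_left _ hsG')
    by_cases hsR' : s ∈ I.jsaRes c T'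
    · exact Finset.mem_union_left _ (Finset.mem_union_right _ hsR')
    apply Finset.mem_union_right
    rcases mem_maxSet.1 hs with ⟨hsg, hcard⟩
    rcases Finset.mem_sdiff.1 hsg with ⟨hsT, hsGR⟩
    apply mem_maxSet.2
    refine ⟨Finset.mem_sdiff.2 ⟨hs', by simp [hsG', hsR']⟩, ?_⟩
    have hP : ((T' \ (I.jsaGen c T' ∪ I.jsaRes c T')).filter
          fun t => I.prio c t < I.prio c s) ⊆
        ((T \ (I.jsaGen c T ∪ I.jsaRes c T)).filter fun t => I.prio c t < I.prio c s) := by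
      intro x hx
      rcases Finset.mem_filter.1 hx with ⟨hx1, hx2⟩
      rcases Finset.mem_sdiff.1 hx1 with ⟨hxT', hxGR'⟩
      rw [Finset.mem_union] at hxGR'
      push_neg at hxGR'
      refine Finset.mem_filter.2 ⟨Finset.mem_sdiff.2 ⟨hsub hxT', ?_⟩, hx2⟩
      rw [Finset.mem_union]
      push_neg
      exact ⟨fun hxG => hxGR'.1 (hGmem x hxG hxT'),
        fun hxR => hxGR'.2 (hRmem x hxR hxT' (fun hG => hxGR'.1 hG))⟩
    have hGcard : (I.jsaGen c T').card ≤ (I.jsaGen c T).card := by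
      rw [jsaGen, jsaGen, maxSet_card, maxSet_card]
      exact min_le_min (le_refl _) (Finset.card_le_card hsub)
    have hRcard : (I.jsaRes c T').card ≤ (I.jsaRes c T).card := by
      rw [jsaRes, jsaRes, maxSet_card, maxSet_card]
      exact min_le_min (le_refl _) (Finset.card_le_card hU)
    have hGR' : (I.jsaGen c T' ∪ I.jsaRes c T').card ≤ (I.jsaGen c T ∪ I.jsaRes c T).card := by
      rw [Finset.card_union_of_disjoint jsa_parts_disjoint,
        Finset.card_union_of_disjoint jsa_parts_disjoint]
      omega
    have hq := jsa_GR_card (I := I) (c := c) (T := T)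
    have h1 := Finset.card_le_card hP
    omega

/-- consistency of `C^MR` -/
lemma CMR_consist (hCT : I.CMR c T ⊆ T') (hsub : T' ⊆ T) : I.CMR c T' = I.CMR c T := by
  have hR : I.mrRes c T' = I.mrRes c T := by
    apply maxSet_consist
    · intro x hx
      have hxdis := (Finset.mem_inter.1 (mrRes_subset hx)).2
      exact Finset.mem_inter.2 ⟨hCT (Finset.mem_union_left _ hx), hxdis⟩
    · exact Finset.inter_subset_inter hsub (le_refl _)
  rw [CMR, CMR, hR]
  congr 1
  apply maxSet_consist
  · intro x hx
    have hx2 := maxSet_subset_s10 hx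
    exact Finset.mem_sdiff.2 ⟨hCT (Finset.mem_union_right _ hx), (Finset.mem_sdiff.1 hx2).2⟩
  · exact Finset.sdiff_subset_sdiff hsub (le_refl _)

/-- consistency of `C^JSA` -/
lemma CJSA_consist (hCT : I.CJSA c T ⊆ T') (hsub : T' ⊆ T) : I.CJSA c T' = I.CJSA c T := by
  have hG : I.jsaGen c T' = I.jsaGen c T := by
    apply maxSet_consist
    · intro x hx
      exact hCT (Finset.mem_union_left _ (Finset.mem_union_left _ hx))
    · exact hsub
  have hR : I.jsaRes c T' = I.jsaRes c T := by
    rw [jsaRes, jsaRes, hG]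
    apply maxSet_consist
    · intro x hx
      have hx2 := jsaRes_subset hx
      rcases Finset.mem_sdiff.1 hx2 with ⟨hxTd, hxG⟩
      exact Finset.mem_sdiff.2 ⟨Finset.mem_inter.2
        ⟨hCT (Finset.mem_union_left _ (Finset.mem_union_right _ hx)),
          (Finset.mem_inter.1 hxTd).2⟩, hxG⟩
    · exact Finset.sdiff_subset_sdiff (Finset.inter_subset_inter hsub (le_refl _)) (le_refl _)
  rw [CJSA, CJSA, hG, hR]
  congr 1
  apply maxSet_consist
  · intro x hx
    have hx2 := maxSet_subset_s10 hx
    exact Finset.mem_sdiff.2 ⟨hCT (Finset.mem_union_right _ hx), (Finset.mem_sdiff.1 hx2).2⟩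
  · exact Finset.sdiff_subset_sdiff hsub (le_refl _)

end Choice

end SchoolChoice
namespace SchoolChoice

variable {S C : Type*} [Fintype S] [DecidableEq S] [Fintype C] [DecidableEq C]

/-- irrelevance of rejected students, from substitutability and consistency -/
lemma choice_irrel (Cc : Finset S → Finset S)
    (hsub : ∀ T T' s, T' ⊆ T → s ∈ T' → s ∈ Cc T → s ∈ Cc T')
    (hcons : ∀ T T', Cc T ⊆ T' → T' ⊆ T → Cc T' = Cc T)
    (hCc : ∀ T, Cc T ⊆ T)
    {B T : Finset S} (hBT : B ⊆ T) (hrej : ∀ u ∈ T, u ∉ B → u ∉ Cc (insert u B)) :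
    Cc T = Cc B := by
  induction T using Finset.strongInductionOn with
  | _ T ih =>
    by_cases hTB : T ⊆ B
    · rw [Finset.Subset.antisymm hTB hBT]
    · rcases Finset.not_subset.1 hTB with ⟨u, huT, huB⟩
      have hu : u ∉ Cc T := by
        intro hmem
        refine hrej u huT huB (hsub T (insert u B) u ?_ (Finset.mem_insert_self _ _) hmem)
        exact Finset.insert_subset huT hBT
      have hCT : Cc T ⊆ T.erase u := fun x hx =>
        Finset.mem_erase.2 ⟨fun h => hu (h ▸ hx), hCc T hx⟩
      have h1 : Cc (T.erase u) = Cc T := hcons T (T.erase u) hCT (Finset.erase_subset _ _)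
      rw [← h1]
      apply ih (T.erase u) (Finset.erase_ssubset huT)
      · exact fun x hx => Finset.mem_erase.2 ⟨fun h => huB (h ▸ hx), hBT hx⟩
      · exact fun v hv hvB => hrej v (Finset.mem_of_mem_erase hv) hvB

variable (I : SchoolChoice S C)

/-- the pool of students weakly preferring `c` to their match under `μ` -/
def pool (μ : S → Option C) (c : C) : Finset S :=
  Finset.univ.filter fun u =>
    I.pref u (some c) < I.pref u none ∧ I.pref u (some c) ≤ I.pref u (μ u)

variable {I}

lemma mem_pool {μ : S → Option C} {c : C} {u : S} :
    u ∈ I.pool μ c ↔ I.acceptable u c ∧ I.pref u (some c) ≤ I.pref u (μ u) := by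
  simp [pool, Finset.mem_filter, acceptable]

lemma assigned_subset_pool {μ : S → Option C} (hμ : I.IsMatching μ) (c : C) :
    I.assigned μ c ⊆ I.pool μ c := by
  intro u hu
  have huc : μ u = some c := (Finset.mem_filter.1 hu).2
  exact mem_pool.2 ⟨hμ.1 u c huc, by rw [huc]⟩

/-- the key pool identity for a stable matching under `C^MR` -/
lemma CMR_pool_identity {μ : S → Option C} (hμ : I.IsStable I.CMR μ) (c : C) :
    I.CMR c (I.pool μ c) = I.assigned μ c := by
  have hBT : I.assigned μ c ⊆ I.pool μ c := assigned_subset_pool hμ.1 c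
  have hacc : I.CMR c (I.assigned μ c) = I.assigned μ c := CMR_all (hμ.1.2 c)
  have hrej : ∀ u ∈ I.pool μ c, u ∉ I.assigned μ c → u ∉ I.CMR c (insert u (I.assigned μ c)) := by
    intro u hu huB
    rcases mem_pool.1 hu with ⟨hacc', hle⟩
    have hne : μ u ≠ some c := fun h => huB (Finset.mem_filter.2 ⟨Finset.mem_univ _, h⟩)
    have hlt : I.pref u (some c) < I.pref u (μ u) := by
      rcases lt_or_eq_of_le hle with h | h
      · exact h
      · exact absurd (I.pref_inj u h.symm) hne
    exact hμ.2 u c hacc' hlt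
  rw [choice_irrel (I.CMR c) (fun T T' s h1 h2 h3 => CMR_subst h1 h2 h3)
    (fun T T' h1 h2 => CMR_consist h1 h2) (fun T => CMR_subset) hBT hrej, hacc]

end SchoolChoice
namespace SchoolChoice

variable {S C : Type*} [Fintype S] [DecidableEq S] [Fintype C] [DecidableEq C]

variable (I : SchoolChoice S C)

/-- a cumulative-offer state: students propose only to acceptable schools, and
only after being rejected by every school they strictly prefer -/
def Adm (A : C → Finset S) : Prop :=
  (∀ c, ∀ s ∈ A c, I.acceptable s c) ∧
  ∀ c c' s, s ∈ A c → I.acceptable s c' → I.pref s (some c') < I.pref s (some c) →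
    s ∈ A c' ∧ s ∉ I.CJSA c' (A c')

/-- the key invariant: disadvantaged students are only rejected at schools they
strictly prefer to their minority-reserve match -/
def Jinv (μMR : S → Option C) (A : C → Finset S) : Prop :=
  ∀ c, ∀ s ∈ A c, s ∈ I.dis → s ∉ I.CJSA c (A c) → I.pref s (some c) < I.pref s (μMR s)

variable {I}

lemma Jinv_at {μMR : S → Option C} (hMR : I.IsStable I.CMR μMR)
    (hhc : ∀ c : C, (I.assigned μMR c ∩ I.dis).card ≤ I.qR c)
    {A : C → Finset S} (hAdm : I.Adm A) (c₀ : C)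
    (hother : ∀ c, c ≠ c₀ → ∀ s ∈ A c, s ∈ I.dis → s ∉ I.CJSA c (A c) →
      I.pref s (some c) < I.pref s (μMR s)) :
    ∀ u ∈ A c₀, u ∈ I.dis → u ∉ I.CJSA c₀ (A c₀) → I.pref u (some c₀) < I.pref u (μMR u) := by
  intro u hu hudis hurej
  by_contra hcon
  push_neg at hcon
  -- no disadvantaged student in the pool at c₀ strictly prefers their MR match to c₀
  have helper : ∀ t ∈ A c₀, t ∈ I.dis → I.pref t (μMR t) < I.pref t (some c₀) → False := by
    intro t ht htdis hlt
    have hacct : I.acceptable t c₀ := hAdm.1 c₀ t ht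
    rcases hm : μMR t with _ | c₁
    · rw [hm] at hlt
      exact absurd (hlt.trans hacct) (lt_irrefl _)
    · rw [hm] at hlt
      have hacc1 : I.acceptable t c₁ := hMR.1.1 t c₁ hm
      have hne : c₁ ≠ c₀ := by
        intro h; rw [h] at hlt; exact absurd hlt (lt_irrefl _)
      rcases hAdm.2 c₀ c₁ t ht hacc1 hlt with ⟨ht1, ht2⟩
      have := hother c₁ hne t ht1 htdis ht2
      rw [hm] at this
      exact absurd this (lt_irrefl _)
  -- hence every disadvantaged student in A c₀ is in the MR pool of c₀
  have hAp : ∀ t ∈ A c₀, t ∈ I.dis → t ∈ I.pool μMR c₀ := by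
    intro t ht htdis
    refine mem_pool.2 ⟨hAdm.1 c₀ t ht, ?_⟩
    by_contra h
    push_neg at h
    exact helper t ht htdis h
  -- u's MR match is exactly c₀
  have hum : μMR u = some c₀ := by
    rcases lt_or_eq_of_le hcon with h | h
    · exact absurd (helper u hu hudis h) id
    · exact I.pref_inj u h
  have huassigned : u ∈ I.assigned μMR c₀ ∩ I.dis :=
    Finset.mem_inter.2 ⟨Finset.mem_filter.2 ⟨Finset.mem_univ _, hum⟩, hudis⟩
  -- counting
  have hW := dis_reject_JSA hudis hu hurej
  have hWsub : ((A c₀ ∩ I.dis).filter fun t => I.prio c₀ t < I.prio c₀ u) ⊆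
      ((I.pool μMR c₀ ∩ I.dis).filter fun t => I.prio c₀ t < I.prio c₀ u) := by
    intro t ht
    rcases Finset.mem_filter.1 ht with ⟨ht1, ht2⟩
    rcases Finset.mem_inter.1 ht1 with ⟨htA, htdis⟩
    exact Finset.mem_filter.2 ⟨Finset.mem_inter.2 ⟨hAp t htA htdis, htdis⟩, ht2⟩
  have hW' : I.qR c₀ ≤
      ((I.pool μMR c₀ ∩ I.dis).filter fun t => I.prio c₀ t < I.prio c₀ u).card :=
    hW.trans (Finset.card_le_card hWsub)
  have hpoolcard : I.qR c₀ ≤ (I.pool μMR c₀ ∩ I.dis).card :=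
    hW'.trans (Finset.card_le_card (Finset.filter_subset _ _))
  have hS1Rcard : (I.mrRes c₀ (I.pool μMR c₀)).card = I.qR c₀ := by
    rw [mrRes, maxSet_card]
    omega
  have hS1Rsub : I.mrRes c₀ (I.pool μMR c₀) ⊆ I.assigned μMR c₀ ∩ I.dis := by
    intro x hx
    have hx1 : x ∈ I.CMR c₀ (I.pool μMR c₀) := Finset.mem_union_left _ hx
    rw [CMR_pool_identity hMR c₀] at hx1
    exact Finset.mem_inter.2 ⟨hx1, (Finset.mem_inter.1 (mrRes_subset hx)).2⟩
  have hS1Req : I.mrRes c₀ (I.pool μMR c₀) = I.assigned μMR c₀ ∩ I.dis := by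
    apply Finset.eq_of_subset_of_card_le hS1Rsub
    rw [hS1Rcard]
    exact hhc c₀
  have huS1R : u ∈ I.mrRes c₀ (I.pool μMR c₀) := hS1Req ▸ huassigned
  rcases mem_maxSet.1 huS1R with ⟨_, hcardlt⟩
  exact absurd (hW'.trans_lt hcardlt) (lt_irrefl _)

lemma good_extend {μMR : S → Option C} (hMR : I.IsStable I.CMR μMR)
    (hhc : ∀ c : C, (I.assigned μMR c ∩ I.dis).card ≤ I.qR c)
    {A : C → Finset S} (hAdm : I.Adm A) (hJ : I.Jinv μMR A) {s₀ : S} {c₀ : C}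
    (hacc : I.acceptable s₀ c₀) (hnm : s₀ ∉ A c₀)
    (hb : ∀ c', I.acceptable s₀ c' → I.pref s₀ (some c') < I.pref s₀ (some c₀) →
      s₀ ∈ A c' ∧ s₀ ∉ I.CJSA c' (A c')) :
    I.Adm (Function.update A c₀ (insert s₀ (A c₀))) ∧
      I.Jinv μMR (Function.update A c₀ (insert s₀ (A c₀))) := by
  set A' := Function.update A c₀ (insert s₀ (A c₀)) with hA'
  have hA'c₀ : A' c₀ = insert s₀ (A c₀) := Function.update_self _ _ _
  have hA'ne : ∀ c, c ≠ c₀ → A' c = A c := fun c hc => Function.update_of_ne hc _ _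
  have hsup : ∀ c, A c ⊆ A' c := by
    intro c
    by_cases hc : c = c₀
    · subst hc; rw [hA'c₀]; exact Finset.subset_insert _ _
    · rw [hA'ne c hc]
  have hmem' : ∀ c s, s ∈ A' c → s = s₀ ∧ c = c₀ ∨ s ∈ A c := by
    intro c s hs
    by_cases hc : c = c₀
    · subst hc
      rw [hA'c₀] at hs
      rcases Finset.mem_insert.1 hs with rfl | hs
      · exact Or.inl ⟨rfl, rfl⟩
      · exact Or.inr hs
    · rw [hA'ne c hc] at hs; exact Or.inr hs
  have hrejpersist : ∀ c' t, t ∈ A c' → t ∉ I.CJSA c' (A c') → t ∉ I.CJSA c' (A' c') := by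
    intro c' t htA htrej hmem
    by_cases hc : c' = c₀
    · subst hc
      rw [hA'c₀] at hmem
      exact htrej (CJSA_subst (Finset.subset_insert _ _) htA hmem)
    · rw [hA'ne c' hc] at hmem; exact htrej hmem
  have hAdm' : I.Adm A' := by
    constructor
    · intro c s hs
      rcases hmem' c s hs with ⟨rfl, rfl⟩ | hs
      · exact hacc
      · exact hAdm.1 c s hs
    · intro c c' s hs hacc' hlt
      rcases hmem' c s hs with ⟨rfl, rfl⟩ | hs
      · rcases hb c' hacc' hlt with ⟨h1, h2⟩
        exact ⟨hsup c' h1, hrejpersist c' s h1 h2⟩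
      · rcases hAdm.2 c c' s hs hacc' hlt with ⟨h1, h2⟩
        exact ⟨hsup c' h1, hrejpersist c' s h1 h2⟩
  refine ⟨hAdm', ?_⟩
  intro c s hs hdis hrej
  by_cases hc : c = c₀
  · rw [hc] at hs hrej ⊢
    refine Jinv_at hMR hhc hAdm' c₀ ?_ s hs hdis hrej
    intro c hcne t ht htdis htrej
    rw [hA'ne c hcne] at ht htrej
    exact hJ c t ht htdis htrej
  · rw [hA'ne c hc] at hs hrej
    exact hJ c s hs hdis hrej

end SchoolChoice
/-- in a highly competitive market, μ^JSA weakly dominates μ^MR for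
disadvantaged students. -/
theorem JSA_dominates_MR_highly_competitive {S C : Type*} [Fintype S] [DecidableEq S] [Fintype C] [DecidableEq C]
    (I : SchoolChoice S C) (μMR μJ : S → Option C)
    (hMR : I.IsOptStable I.CMR μMR) (hJ : I.IsOptStable I.CJSA μJ)
    (hhc : ∀ c : C, (I.assigned μMR c ∩ I.dis).card ≤ I.qR c) :
    ∀ s ∈ I.dis, I.pref s (μJ s) ≤ I.pref s (μMR s) := by
  classical
  open SchoolChoice in
  -- take a maximal "good" cumulative-offer state
  obtain ⟨A, hAF, hAmax⟩ :
      ∃ A ∈ (Finset.univ.filter fun A : C → Finset S => I.Adm A ∧ I.Jinv μMR A),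
        ∀ A' ∈ (Finset.univ.filter fun A : C → Finset S => I.Adm A ∧ I.Jinv μMR A),
          (∑ c, (A' c).card) ≤ (∑ c, (A c).card) := by
    apply Finset.exists_max_image
    refine ⟨fun _ => (∅ : Finset S), Finset.mem_filter.2 ⟨Finset.mem_univ _, ?_, ?_⟩⟩
    · exact ⟨fun c s hs => absurd hs (Finset.notMem_empty s),
        fun c c' s hs => absurd hs (Finset.notMem_empty s)⟩
    · intro c s hs; exact absurd hs (Finset.notMem_empty s)
  rcases (Finset.mem_filter.1 hAF).2 with ⟨hAdm, hJinv⟩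
  -- no extension is possible
  have hnoext : ∀ s c, I.acceptable s c → s ∉ A c →
      (∀ c', s ∈ I.CJSA c' (A c') → I.pref s (some c) < I.pref s (some c')) → False := by
    intro s c haccsc hsA hheld
    obtain ⟨c₀, hc₀M, hc₀min⟩ :=
      Finset.exists_min_image
        (Finset.univ.filter fun c'' => I.acceptable s c'' ∧ s ∉ A c'')
        (fun c'' => I.pref s (some c''))
        ⟨c, Finset.mem_filter.2 ⟨Finset.mem_univ _, haccsc, hsA⟩⟩
    rcases (Finset.mem_filter.1 hc₀M).2 with ⟨hacc₀, hnm₀⟩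
    have hc₀c : I.pref s (some c₀) ≤ I.pref s (some c) :=
      hc₀min c (Finset.mem_filter.2 ⟨Finset.mem_univ _, haccsc, hsA⟩)
    have hb : ∀ c', I.acceptable s c' → I.pref s (some c') < I.pref s (some c₀) →
        s ∈ A c' ∧ s ∉ I.CJSA c' (A c') := by
      intro c' hacc' hlt
      have hmem : s ∈ A c' := by
        by_contra hnm'
        exact absurd (hc₀min c' (Finset.mem_filter.2 ⟨Finset.mem_univ _, hacc', hnm'⟩))
          (not_le.2 hlt)
      refine ⟨hmem, fun hheld' => ?_⟩
      have h1 := hheld c' hheld'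
      exact absurd ((hc₀c.trans_lt h1).trans hlt) (lt_irrefl _)
    obtain ⟨hAdm', hJinv'⟩ := good_extend hMR.1 hhc hAdm hJinv hacc₀ hnm₀ hb
    have hle := hAmax _ (Finset.mem_filter.2 ⟨Finset.mem_univ _, hAdm', hJinv'⟩)
    have herase : ∑ c' ∈ Finset.univ.erase c₀,
          (Function.update A c₀ (insert s (A c₀)) c').card
        = ∑ c' ∈ Finset.univ.erase c₀, (A c').card :=
      Finset.sum_congr rfl (fun x hx => by rw [Function.update_of_ne (Finset.mem_erase.1 hx).1])
    have hsum : (∑ c', (Function.update A c₀ (insert s (A c₀)) c').card)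
        = (insert s (A c₀)).card + ∑ c' ∈ Finset.univ.erase c₀, (A c').card := by
      rw [← Finset.add_sum_erase _ (fun c' => (Function.update A c₀ (insert s (A c₀)) c').card)
        (Finset.mem_univ c₀), Function.update_self, herase]
    have hsum2 : (∑ c', (A c').card)
        = (A c₀).card + ∑ c' ∈ Finset.univ.erase c₀, (A c').card :=
      (Finset.add_sum_erase _ (fun c' => (A c').card) (Finset.mem_univ c₀)).symm
    rw [hsum, hsum2, Finset.card_insert_of_notMem hnm₀] at hle
    omega
  -- the matching induced by the maximal state
  set ν : S → Option C := fun s =>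
    if h : ∃ c, s ∈ I.CJSA c (A c) then some h.choose else none with hν
  have hheld_unique : ∀ s c c', s ∈ I.CJSA c (A c) → s ∈ I.CJSA c' (A c') → c = c' := by
    intro s c c' h h'
    rcases lt_trichotomy (I.pref s (some c)) (I.pref s (some c')) with hlt | heq | hlt
    · rcases hAdm.2 c' c s (CJSA_subset h') (hAdm.1 c s (CJSA_subset h)) hlt with ⟨_, h2⟩
      exact absurd h h2
    · exact Option.some_injective C (I.pref_inj s heq)
    · rcases hAdm.2 c c' s (CJSA_subset h) (hAdm.1 c' s (CJSA_subset h')) hlt with ⟨_, h2⟩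
      exact absurd h' h2
  have hν_some : ∀ s c, ν s = some c ↔ s ∈ I.CJSA c (A c) := by
    intro s c
    constructor
    · intro h
      rw [hν] at h
      simp only at h
      split at h
      · rename_i hex
        have := hex.choose_spec
        rwa [Option.some_inj.1 h] at this
      · exact absurd h (by simp)
    · intro h
      have hex : ∃ c, s ∈ I.CJSA c (A c) := ⟨c, h⟩
      rw [hν]
      simp only [dif_pos hex]
      rw [hheld_unique s hex.choose c hex.choose_spec h]
  have hassigned : ∀ c, I.assigned ν c = I.CJSA c (A c) := by
    intro c
    ext u
    simp only [assigned, Finset.mem_filter, Finset.mem_univ, true_and]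
    exact hν_some u c
  have hmatch : I.IsMatching ν := by
    constructor
    · intro s c h
      exact hAdm.1 c s (CJSA_subset ((hν_some s c).1 h))
    · intro c
      rw [hassigned c]
      exact CJSA_card_le
  have hstable : I.IsStable I.CJSA ν := by
    refine ⟨hmatch, ?_⟩
    intro s c hacc hlt hmem
    rw [hassigned c] at hmem
    by_cases hsA : s ∈ A c
    · have hrej : s ∉ I.CJSA c (A c) := by
        intro h
        rw [← hν_some s c] at h
        rw [h] at hlt
        exact absurd hlt (lt_irrefl _)
      have hcons : I.CJSA c (insert s (I.CJSA c (A c))) = I.CJSA c (A c) :=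
        CJSA_consist (Finset.subset_insert _ _) (Finset.insert_subset hsA CJSA_subset)
      rw [hcons] at hmem
      exact hrej hmem
    · refine hnoext s c hacc hsA ?_
      intro c' hheld'
      rw [← hν_some s c'] at hheld'
      rwa [hheld'] at hlt
  have hdom : ∀ s ∈ I.dis, I.pref s (ν s) ≤ I.pref s (μMR s) := by
    intro s hdis
    by_contra hcon
    push_neg at hcon
    rcases hm : μMR s with _ | c₁
    · rw [hm] at hcon
      rcases hn : ν s with _ | c₂
      · rw [hn] at hcon; exact absurd hcon (lt_irrefl _)
      · have : I.acceptable s c₂ := hmatch.1 s c₂ hn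
        rw [hn] at hcon
        exact absurd (hcon.trans this) (lt_irrefl _)
    · have hacc1 : I.acceptable s c₁ := hMR.1.1.1 s c₁ hm
      rw [hm] at hcon
      by_cases hsA : s ∈ A c₁
      · have hrej : s ∉ I.CJSA c₁ (A c₁) := by
          intro h
          rw [← hν_some s c₁] at h
          rw [h] at hcon
          exact absurd hcon (lt_irrefl _)
        have := hJinv c₁ s hsA hdis hrej
        rw [hm] at this
        exact absurd this (lt_irrefl _)
      · refine hnoext s c₁ hacc1 hsA ?_
        intro c' hheld'
        rw [← hν_some s c'] at hheld'
        rwa [hheld'] at hcon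
  intro s hdis
  exact (hJ.2 ν hstable s).trans (hdom s hdis)
end
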